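/- Let k ≥ 1 be an integer and ε ∈ (0, 1/3]. Let A and B be real square matrices with the same index set such that |A_{i,j}| ≤ 25 for all i,j, and such that for all i,j there exists ρ_{i,j} ∈ [1−3ε, 1+3ε] with B_{i,j} = ρ_{i,j}·A_{i,j}. Then for every subset S of the index set with |S| = k+1, one has |det(A_S) − det(B_S)| ≤ (k+1)^{k+2} · 25^{k+1} · (1+3ε)^k · 3ε. -/

import Mathlib

noncomputable def principalDet {ι : Type*} [DecidableEq ι] (A : Matrix ι ι ℝ) (S : Finset ι) : ℝ :=
  (A.submatrix (fun i : S => (i : ι)) (fun j : S => (j : ι))).det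

lemma abs_prod_sub_prod_le {α : Type*} [DecidableEq α] (s : Finset α) (f g : α → ℝ)
    (C d : ℝ) (hC : 0 ≤ C) (hd : 0 ≤ d)
    (hf : ∀ i ∈ s, |f i| ≤ C) (hg : ∀ i ∈ s, |g i| ≤ C)
    (hfg : ∀ i ∈ s, |f i - g i| ≤ d) :
    |∏ i ∈ s, f i - ∏ i ∈ s, g i| ≤ s.card * d * C ^ (s.card - 1) := by
  induction s using Finset.induction_on with
  | empty => simp
  | insert a s ha ih =>
    have hfa := hf a (Finset.mem_insert_self a s)
    have hga := hg a (Finset.mem_insert_self a s)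
    have hfga := hfg a (Finset.mem_insert_self a s)
    have hf' : ∀ i ∈ s, |f i| ≤ C := fun i hi => hf i (Finset.mem_insert_of_mem hi)
    have hg' : ∀ i ∈ s, |g i| ≤ C := fun i hi => hg i (Finset.mem_insert_of_mem hi)
    have hfg' : ∀ i ∈ s, |f i - g i| ≤ d := fun i hi => hfg i (Finset.mem_insert_of_mem hi)
    have ih' := ih hf' hg' hfg'
    rw [Finset.prod_insert ha, Finset.prod_insert ha, Finset.card_insert_of_notMem ha]
    have hP : |∏ i ∈ s, f i| ≤ C ^ s.card := by
      rw [Finset.abs_prod, ← Finset.prod_const]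
      exact Finset.prod_le_prod (fun i _ => abs_nonneg _) hf'
    have key : f a * ∏ i ∈ s, f i - g a * ∏ i ∈ s, g i
        = (f a - g a) * ∏ i ∈ s, f i + g a * (∏ i ∈ s, f i - ∏ i ∈ s, g i) := by ring
    rw [key]
    have h1 : |f a - g a| * |∏ i ∈ s, f i| ≤ d * C ^ s.card :=
      mul_le_mul hfga hP (abs_nonneg _) hd
    have h2 : |g a| * |∏ i ∈ s, f i - ∏ i ∈ s, g i|
        ≤ C * (↑s.card * d * C ^ (s.card - 1)) :=
      mul_le_mul hga ih' (abs_nonneg _) hC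
    have h3 : C * (↑s.card * d * C ^ (s.card - 1)) ≤ ↑s.card * d * C ^ s.card := by
      rcases Nat.eq_zero_or_pos s.card with h0 | h1
      · simp [h0]
      · have e1 : C * (↑s.card * d * C ^ (s.card - 1))
            = ↑s.card * d * (C * C ^ (s.card - 1)) := by ring
        rw [e1, ← pow_succ']
        have e2 : s.card - 1 + 1 = s.card := by omega
        rw [e2]
    calc |(f a - g a) * ∏ i ∈ s, f i + g a * (∏ i ∈ s, f i - ∏ i ∈ s, g i)|
        ≤ |(f a - g a) * ∏ i ∈ s, f i| + |g a * (∏ i ∈ s, f i - ∏ i ∈ s, g i)| := abs_add_le _ _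
      _ = |f a - g a| * |∏ i ∈ s, f i| + |g a| * |∏ i ∈ s, f i - ∏ i ∈ s, g i| := by
          rw [abs_mul, abs_mul]
      _ ≤ d * C ^ s.card + ↑s.card * d * C ^ s.card := by linarith
      _ = (↑(s.card + 1)) * d * C ^ (s.card + 1 - 1) := by
          simp only [Nat.add_sub_cancel]
          push_cast
          ring

theorem stmt_5 {ι : Type*} [Fintype ι] [DecidableEq ι] (k : ℕ) (hk : 1 ≤ k)
    (ε : ℝ) (hε0 : 0 < ε) (hε : ε ≤ 1 / 3)
    (A B : Matrix ι ι ℝ)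
    (hAbound : ∀ i j, |A i j| ≤ 25)
    (hρ : ∀ i j, ∃ ρ : ℝ, ρ ∈ Set.Icc (1 - 3 * ε) (1 + 3 * ε) ∧ B i j = ρ * A i j) :
    ∀ S : Finset ι, S.card = k + 1 →
      |principalDet A S - principalDet B S| ≤
        (k + 1 : ℝ) ^ (k + 2) * 25 ^ (k + 1) * (1 + 3 * ε) ^ k * (3 * ε) := by
  intro S hS
  set C : ℝ := 25 * (1 + 3 * ε) with hCdef
  set d : ℝ := 25 * (3 * ε) with hddef
  have hC0 : (0:ℝ) ≤ C := by positivity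
  have hd0 : (0:ℝ) ≤ d := by positivity
  -- entry bounds
  have hBbound : ∀ i j, |B i j| ≤ C := by
    intro i j
    obtain ⟨ρ, ⟨hρ1, hρ2⟩, hB⟩ := hρ i j
    have hρabs : |ρ| ≤ 1 + 3 * ε := by
      rw [abs_le]; constructor <;> nlinarith
    rw [hB, abs_mul]
    calc |ρ| * |A i j| ≤ (1 + 3 * ε) * 25 :=
          mul_le_mul hρabs (hAbound i j) (abs_nonneg _) (by positivity)
      _ = C := by ring
  have hABdiff : ∀ i j, |A i j - B i j| ≤ d := by
    intro i j
    obtain ⟨ρ, ⟨hρ1, hρ2⟩, hB⟩ := hρ i j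
    have : A i j - B i j = (1 - ρ) * A i j := by rw [hB]; ring
    rw [this, abs_mul]
    have h1ρ : |1 - ρ| ≤ 3 * ε := by rw [abs_le]; constructor <;> linarith
    calc |1 - ρ| * |A i j| ≤ (3 * ε) * 25 :=
          mul_le_mul h1ρ (hAbound i j) (abs_nonneg _) (by positivity)
      _ = d := by ring
  have hAbound' : ∀ i j, |A i j| ≤ C := by
    intro i j
    refine (hAbound i j).trans ?_
    nlinarith
  -- determinant expansion
  set A' := A.submatrix (fun i : S => (i : ι)) (fun j : S => (j : ι)) with hA'
  set B' := B.submatrix (fun i : S => (i : ι)) (fun j : S => (j : ι)) with hB'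
  have hcardS : Fintype.card S = k + 1 := by rw [Fintype.card_coe, hS]
  have hperm : ∀ σ : Equiv.Perm S,
      |∏ i, A' (σ i) i - ∏ i, B' (σ i) i| ≤ (k + 1 : ℝ) * d * C ^ k := by
    intro σ
    have := abs_prod_sub_prod_le (Finset.univ : Finset S)
      (fun i => A' (σ i) i) (fun i => B' (σ i) i) C d hC0 hd0
      (fun i _ => hAbound' _ _) (fun i _ => hBbound _ _) (fun i _ => hABdiff _ _)
    simp only [Finset.card_univ, Fintype.card_coe, hS, Nat.add_sub_cancel,
      Nat.cast_add, Nat.cast_one] at this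
    exact this
  have hdet : |A'.det - B'.det| ≤ (Nat.factorial (k+1) : ℝ) * ((k + 1 : ℝ) * d * C ^ k) := by
    rw [Matrix.det_apply', Matrix.det_apply', ← Finset.sum_sub_distrib]
    calc |∑ σ : Equiv.Perm S, ((Equiv.Perm.sign σ : ℝ) * ∏ i, A' (σ i) i
            - (Equiv.Perm.sign σ : ℝ) * ∏ i, B' (σ i) i)|
        ≤ ∑ σ : Equiv.Perm S, |(Equiv.Perm.sign σ : ℝ) * ∏ i, A' (σ i) i
            - (Equiv.Perm.sign σ : ℝ) * ∏ i, B' (σ i) i| := Finset.abs_sum_le_sum_abs _ _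
      _ ≤ ∑ σ : Equiv.Perm S, (k + 1 : ℝ) * d * C ^ k := by
          apply Finset.sum_le_sum
          intro σ _
          have e : (Equiv.Perm.sign σ : ℝ) * ∏ i, A' (σ i) i
              - (Equiv.Perm.sign σ : ℝ) * ∏ i, B' (σ i) i
              = (Equiv.Perm.sign σ : ℝ) * (∏ i, A' (σ i) i - ∏ i, B' (σ i) i) := by ring
          rw [e, abs_mul]
          have hs : |(Equiv.Perm.sign σ : ℝ)| = 1 := by
            rcases Int.units_eq_one_or (Equiv.Perm.sign σ) with h | h <;> rw [h] <;> norm_num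
          rw [hs, one_mul]
          exact hperm σ
      _ = (Fintype.card (Equiv.Perm S) : ℝ) * ((k + 1 : ℝ) * d * C ^ k) := by
          rw [Finset.sum_const, Finset.card_univ, nsmul_eq_mul]
      _ = (Nat.factorial (k+1) : ℝ) * ((k + 1 : ℝ) * d * C ^ k) := by
          rw [Fintype.card_perm, hcardS]
  refine hdet.trans ?_
  have hfact : (Nat.factorial (k+1) : ℝ) ≤ (k + 1 : ℝ) ^ (k + 1) := by
    have := Nat.factorial_le_pow (k + 1)
    calc (Nat.factorial (k+1) : ℝ) ≤ ((k+1)^(k+1) : ℕ) := by exact_mod_cast this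
      _ = (k + 1 : ℝ) ^ (k + 1) := by push_cast; ring
  calc (Nat.factorial (k+1) : ℝ) * ((k + 1 : ℝ) * d * C ^ k)
      ≤ (k + 1 : ℝ) ^ (k + 1) * ((k + 1 : ℝ) * d * C ^ k) := by
        apply mul_le_mul_of_nonneg_right hfact
        positivity
    _ = (k + 1 : ℝ) ^ (k + 2) * 25 ^ (k + 1) * (1 + 3 * ε) ^ k * (3 * ε) := by
        rw [hCdef, hddef, mul_pow]
        ring
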